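/- Let G be a connected, sduo-free finite simple graph with at least two vertices. Then there exists a vertex v of G such that G − v is connected and G − v has at most one s-duo. -/

import Mathlib

variable {V : Type*}

/-- `M` is a module of the simple graph `G`: every vertex outside `M` is adjacent
to every vertex of `M` or to no vertex of `M`. -/
def GraphModule (G : SimpleGraph V) (M : Set V) : Prop :=
  ∀ v ∉ M, (∀ x ∈ M, G.Adj v x) ∨ (∀ x ∈ M, ¬ G.Adj v x)

/-- `M` is a module of the digraph with arc relation `D`. -/
def DigraphModule (D : V → V → Prop) (M : Set V) : Prop :=
  ∀ v ∉ M, ∀ x ∈ M, ∀ y ∈ M, (D v x ↔ D v y) ∧ (D x v ↔ D y v)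

/-- The digraph `D` is an orientation of the simple graph `G`: there is an arc between
`x` and `y` (in exactly one direction) iff `x` and `y` are adjacent in `G`. -/
def IsOrientation (G : SimpleGraph V) (D : V → V → Prop) : Prop :=
  ∀ x y : V, ((D x y ∨ D y x) ↔ G.Adj x y) ∧ ¬ (D x y ∧ D y x)

/-- A graph is prime if it has at least 3 vertices and all its modules are trivial. -/
def GraphPrime [Fintype V] (G : SimpleGraph V) : Prop :=
  3 ≤ Fintype.card V ∧
    ∀ M : Set V, GraphModule G M → M.Subsingleton ∨ M = Set.univ

/-- A digraph is prime if it has at least 3 vertices and all its modules are trivial. -/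
def DigraphPrime [Fintype V] (D : V → V → Prop) : Prop :=
  3 ≤ Fintype.card V ∧
    ∀ M : Set V, DigraphModule D M → M.Subsingleton ∨ M = Set.univ

/-- A graph is primarily orientable if it admits a prime orientation. -/
def PrimarilyOrientable [Fintype V] (G : SimpleGraph V) : Prop :=
  ∃ D : V → V → Prop, IsOrientation G D ∧ DigraphPrime D

/-- `S` is a stable module (s-module) of `G`: a module of size at least 2 inducing no edges. -/
def StableModule (G : SimpleGraph V) (S : Set V) : Prop :=
  GraphModule G S ∧ 2 ≤ S.ncard ∧ ∀ x ∈ S, ∀ y ∈ S, ¬ G.Adj x y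

/-- The neighbourhood `N_G(M)` of a module `M`: the vertices outside `M` adjacent to
some (equivalently, every) vertex of `M`. -/
def modNbhd (G : SimpleGraph V) (M : Set V) : Set V :=
  {v | v ∉ M ∧ ∃ x ∈ M, G.Adj v x}

/-- `M` is a module of the subgraph of `G` induced on the vertex set `X`. -/
def ModuleOn (G : SimpleGraph V) (X M : Set V) : Prop :=
  M ⊆ X ∧ ∀ v ∈ X \ M, (∀ x ∈ M, G.Adj v x) ∨ (∀ x ∈ M, ¬ G.Adj v x)

/-- `S` is an s-duo (stable module of size 2) of the subgraph of `G` induced on `X`. -/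
def SduoOn (G : SimpleGraph V) (X S : Set V) : Prop :=
  ModuleOn G X S ∧ S.ncard = 2 ∧ ∀ x ∈ S, ∀ y ∈ S, ¬ G.Adj x y

/-- `S` is an s-duo of `G`. -/
def Sduo (G : SimpleGraph V) (S : Set V) : Prop :=
  SduoOn G Set.univ S

/-- `G` has no s-duo. -/
def SduoFree (G : SimpleGraph V) : Prop := ∀ S : Set V, ¬ Sduo G S

/-- `M` is a module of the subdigraph of `D` induced on the vertex set `X`. -/
def DModuleOn (D : V → V → Prop) (X M : Set V) : Prop :=
  M ⊆ X ∧ ∀ v ∈ X \ M, ∀ x ∈ M, ∀ y ∈ M, (D v x ↔ D v y) ∧ (D x v ↔ D y v)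

/-- The subdigraph of `D` induced on `X` is prime. -/
def DPrimeOn (D : V → V → Prop) (X : Set V) : Prop :=
  3 ≤ X.ncard ∧ ∀ M : Set V, DModuleOn D X M → M.Subsingleton ∨ M = X

/-- `Ext_D(X)`: vertices `v ∉ X` such that `D[X ∪ {v}]` is prime. -/
def ExtD (D : V → V → Prop) (X : Set V) : Set V :=
  {v | v ∉ X ∧ DPrimeOn D (X ∪ {v})}

/-- `⟨X⟩_D`: vertices `v ∉ X` such that `X` is a module of `D[X ∪ {v}]`. -/
def InnD (D : V → V → Prop) (X : Set V) : Set V :=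
  {v | v ∉ X ∧ DModuleOn D (X ∪ {v}) X}

/-- `X_D(u)`: vertices `v ∉ X` such that `{u, v}` is a module of `D[X ∪ {v}]`. -/
def AttD (D : V → V → Prop) (X : Set V) (u : V) : Set V :=
  {v | v ∉ X ∧ DModuleOn D (X ∪ {v}) ({u, v} : Set V)}


open SimpleGraph in
/-- Extract the standard data from an s-duo on an induced vertex set. -/
private lemma sduo_pair {G : SimpleGraph V} {X S : Set V} (h : SduoOn G X S) :
    ∃ x y : V, x ≠ y ∧ S = {x, y} ∧ ¬ G.Adj x y ∧ x ∈ X ∧ y ∈ X ∧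
      ∀ z ∈ X, z ≠ x → z ≠ y → (G.Adj z x ↔ G.Adj z y) := by
  obtain ⟨⟨hsub, hmod⟩, hcard, hstab⟩ := h
  obtain ⟨x, y, hxy, rfl⟩ := Set.ncard_eq_two.mp hcard
  refine ⟨x, y, hxy, rfl, hstab x (by simp) y (by simp),
    hsub (by simp), hsub (by simp), ?_⟩
  intro z hz hzx hzy
  rcases hmod z ⟨hz, by simp [hzx, hzy]⟩ with hall | hnone
  · exact iff_of_true (hall x (by simp)) (hall y (by simp))
  · exact iff_of_false (hnone x (by simp)) (hnone y (by simp))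

open SimpleGraph in
/-- Build an s-duo of `G` itself from a nonadjacent pair that no vertex distinguishes. -/
private lemma sduo_build {G : SimpleGraph V} {x y : V} (hxy : x ≠ y) (hnadj : ¬ G.Adj x y)
    (h : ∀ z, z ≠ x → z ≠ y → (G.Adj z x ↔ G.Adj z y)) : Sduo G ({x, y} : Set V) := by
  refine ⟨⟨Set.subset_univ _, ?_⟩, Set.ncard_pair hxy, ?_⟩
  · intro z hz
    have hzx : z ≠ x := by rintro rfl; simp at hz
    have hzy : z ≠ y := by rintro rfl; simp at hz
    have hiff := h z hzx hzy
    by_cases hadj : G.Adj z x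
    · left; rintro t (rfl | rfl)
      · exact hadj
      · exact hiff.mp hadj
    · right; rintro t (rfl | rfl)
      · exact hadj
      · exact fun ht => hadj (hiff.mpr ht)
  · rintro p (rfl | rfl) q (rfl | rfl)
    · exact G.irrefl
    · exact hnadj
    · exact fun hh => hnadj hh.symm
    · exact G.irrefl

open SimpleGraph in
/-- A walk avoiding the complement of `s` yields reachability in the induced graph. -/
private lemma reach_of_avoid {G : SimpleGraph V} {s : Set V} :
    ∀ {x y : V} (p : G.Walk x y), (∀ z ∈ p.support, z ∈ s) →
      ∀ (hx : x ∈ s) (hy : y ∈ s), (G.induce s).Reachable ⟨x, hx⟩ ⟨y, hy⟩ := by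
  intro x y p
  induction p with
  | nil => intro _ hx hy; exact Reachable.refl _
  | @cons x u y h p ih =>
    intro hp hx hy
    have hu : u ∈ s := hp _ (by simp)
    refine Reachable.trans (Adj.reachable ?_) (ih (fun z hz => hp z (by simp [hz])) hu hy)
    exact h

open SimpleGraph in
/-- If `a` dominates the neighbourhood of `b` and `G` is connected, `G - b` is connected. -/
private lemma twin_conn {G : SimpleGraph V} {a b : V} (hab : a ≠ b) (hnadj : ¬ G.Adj a b)
    (htwin : ∀ u, G.Adj b u → G.Adj a u) (hconn : G.Connected) :
    (G.induce ({b}ᶜ : Set V)).Connected := by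
  classical
  have hfmem : ∀ x : V, (if x = b then a else x) ∈ ({b}ᶜ : Set V) := by
    intro x
    by_cases h : x = b <;> simp [h, hab]
  have key : ∀ (x y : V) (p : G.Walk x y) (hy : y ≠ b),
      (G.induce ({b}ᶜ : Set V)).Reachable ⟨if x = b then a else x, hfmem x⟩
        ⟨y, by simpa using hy⟩ := by
    intro x y p
    induction p with
    | nil =>
      intro hy
      simp only [if_neg hy]
      exact SimpleGraph.Reachable.refl _
    | @cons x u y h p ih =>
      intro hy
      refine Reachable.trans ?_ (ih hy)
      by_cases hx : x = b
      · by_cases hu : u = b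
        · subst hx; subst hu; exact absurd h (G.irrefl)
        · subst hx
          by_cases hua : u = a
          · subst hua
            simp only [if_pos rfl, if_neg hu]
            exact SimpleGraph.Reachable.refl _
          · simp only [if_pos rfl, if_neg hu]
            exact Adj.reachable (by exact htwin u h)
      · by_cases hu : u = b
        · subst hu
          by_cases hxa : x = a
          · subst hxa
            simp only [if_pos rfl, if_neg hx]
            exact SimpleGraph.Reachable.refl _
          · simp only [if_neg hx, if_pos rfl]
            exact Adj.reachable (by exact (htwin x h.symm).symm)
        · simp only [if_neg hx, if_neg hu]
          exact Adj.reachable (by exact h)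
  rw [connected_iff]
  refine ⟨?_, ⟨⟨a, by simp [hab]⟩⟩⟩
  rintro ⟨x, hx⟩ ⟨y, hy⟩
  have hx' : x ≠ b := by simpa using hx
  have hy' : y ≠ b := by simpa using hy
  obtain ⟨p⟩ := hconn.preconnected x y
  have := key x y p hy'
  simpa only [if_neg hx'] using this

open SimpleGraph in
/-- Key step: in `G - b`, for an s-duo `{p, q}` with `b` adjacent to `p` but not `q`,
the vertex `q` must be `w`. -/
private lemma other_is_w {G : SimpleGraph V}
    {w a b : V} (hab : a ≠ b) (hnadj : ¬ G.Adj a b) (hwb : ¬ G.Adj w b)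
    (hmod : ∀ z, z ≠ w → z ≠ a → z ≠ b → (G.Adj z a ↔ G.Adj z b))
    {p q : V} (hnpq : ¬ G.Adj p q) (hpb : p ≠ b) (hqb : q ≠ b)
    (hTmod : ∀ z, z ≠ b → z ≠ p → z ≠ q → (G.Adj z p ↔ G.Adj z q))
    (hbp : G.Adj b p) (hbq : ¬ G.Adj b q) : q = w := by
  have hpa : p ≠ a := by rintro rfl; exact hnadj hbp.symm
  have hpw : p ≠ w := by rintro rfl; exact hwb hbp.symm
  have hap : G.Adj a p := ((hmod p hpw hpa hpb).mpr hbp.symm).symm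
  by_contra hqw
  have hqa : q ≠ a := by rintro rfl; exact hnpq hap.symm
  have haq : G.Adj a q := (hTmod a hab hpa.symm hqa.symm).mp hap
  exact hbq ((hmod q hqw hqa hqb).mp haq.symm).symm

open SimpleGraph in
/-- The main case: if `{a, b}` is an s-duo of `G - w` with `w` adjacent to `a` only,
then `b` is a good vertex. -/
private lemma case_pos [Fintype V] {G : SimpleGraph V} (hconn : G.Connected)
    (hfree : SduoFree G) {w a b : V} (hab : a ≠ b) (hnadj : ¬ G.Adj a b)
    (hwa : G.Adj w a) (hwb : ¬ G.Adj w b)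
    (hmod : ∀ z, z ≠ w → z ≠ a → z ≠ b → (G.Adj z a ↔ G.Adj z b)) :
    (G.induce ({b}ᶜ : Set V)).Connected ∧
      ∀ S S' : Set V, SduoOn G ({b}ᶜ : Set V) S → SduoOn G ({b}ᶜ : Set V) S' → S = S' := by
  have htwin : ∀ u, G.Adj b u → G.Adj a u := by
    intro u hbu
    have hua : u ≠ a := by rintro rfl; exact hnadj hbu.symm
    have huw : u ≠ w := by rintro rfl; exact hwb hbu.symm
    exact ((hmod u huw hua hbu.ne').mpr hbu.symm).symm
  refine ⟨twin_conn hab hnadj htwin hconn, ?_⟩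
  have key : ∀ T : Set V, SduoOn G ({b}ᶜ : Set V) T →
      ∃ t : V, t ≠ w ∧ ¬ G.Adj w t ∧ G.Adj b t ∧ T = {w, t} ∧
        ∀ z, z ≠ b → z ≠ w → z ≠ t → (G.Adj z w ↔ G.Adj z t) := by
    intro T hT
    obtain ⟨p, q, hpq, rfl, hnpq, hpX, hqX, hTmod'⟩ := sduo_pair hT
    have hpb : p ≠ b := by simpa using hpX
    have hqb : q ≠ b := by simpa using hqX
    have hTmod : ∀ z, z ≠ b → z ≠ p → z ≠ q → (G.Adj z p ↔ G.Adj z q) := by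
      intro z hz; exact hTmod' z (by simpa using hz)
    have honeT : (G.Adj b p ∧ ¬ G.Adj b q) ∨ (G.Adj b q ∧ ¬ G.Adj b p) := by
      by_contra hcon
      push_neg at hcon
      refine hfree {p, q} (sduo_build hpq hnpq ?_)
      intro z hzp hzq
      by_cases hzb : z = b
      · subst hzb; exact ⟨hcon.1, hcon.2⟩
      · exact hTmod z hzb hzp hzq
    rcases honeT with ⟨hbp, hbq⟩ | ⟨hbq, hbp⟩
    · have hq : q = w := other_is_w hab hnadj hwb hmod hnpq hpb hqb hTmod hbp hbq
      have hpw : p ≠ w := by rintro rfl; exact hwb hbp.symm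
      refine ⟨p, hpw, fun h => hnpq (by rw [hq]; exact h.symm), hbp, ?_, ?_⟩
      · rw [← hq, Set.pair_comm]
      · intro z hzb hzw hzp
        have := hTmod z hzb hzp (fun h => hzw (h.trans hq))
        rw [hq] at this
        exact this.symm
    · have hp : p = w := other_is_w hab hnadj hwb hmod (fun h => hnpq h.symm) hqb hpb
        (fun z hzb hzq hzp => (hTmod z hzb hzp hzq).symm) hbq hbp
      refine ⟨q, fun h => hpq (hp.trans h.symm), by rw [← hp]; exact hnpq, hbq, by rw [← hp], ?_⟩
      intro z hzb hzw hzq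
      have := hTmod z hzb (fun h => hzw (h.trans hp)) hzq
      rw [hp] at this
      exact this
  intro S S' h1 h2
  obtain ⟨s, hsw, hws, hbs, rfl, m1⟩ := key S h1
  obtain ⟨t, htw, hwt, hbt, rfl, m2⟩ := key S' h2
  by_cases hst : s = t
  · rw [hst]
  · exfalso
    have hnst : ¬ G.Adj s t := by
      have := (m1 t hbt.ne' htw (Ne.symm hst)).mpr
      intro h
      exact hwt (this h.symm).symm
    refine hfree {s, t} (sduo_build hst hnst ?_)
    intro z hzs hzt
    by_cases hzw : z = w
    · subst hzw; exact iff_of_false (fun h => hws h) (fun h => hwt h)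
    · by_cases hzb : z = b
      · subst hzb; exact iff_of_true hbs hbt
      · exact (m1 z hzb hzw hzs).symm.trans (m2 z hzb hzw hzt)

/-- If `G` is connected and sduo-free with at least two vertices, then there is a vertex
`v` such that `G - v` is connected and has at most one s-duo. -/
theorem exists_good_vertex [Fintype V] (G : SimpleGraph V)
    (hcard : 2 ≤ Fintype.card V) (hconn : G.Connected) (hfree : SduoFree G) :
    ∃ v : V, (G.induce ({v}ᶜ : Set V)).Connected ∧
      ∀ S S' : Set V, SduoOn G ({v}ᶜ : Set V) S → SduoOn G ({v}ᶜ : Set V) S' →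
        S = S' := by
  classical
  by_cases hex : ∃ (w : V) (S : Set V), SduoOn G ({w}ᶜ : Set V) S
  · obtain ⟨w, S, hS⟩ := hex
    obtain ⟨x, y, hxy, rfl, hnadj, hxX, hyX, hmod'⟩ := sduo_pair hS
    have hxw : x ≠ w := by simpa using hxX
    have hyw : y ≠ w := by simpa using hyX
    have hmod : ∀ z, z ≠ w → z ≠ x → z ≠ y → (G.Adj z x ↔ G.Adj z y) := by
      intro z hz; exact hmod' z (by simpa using hz)
    have hone : (G.Adj w x ∧ ¬ G.Adj w y) ∨ (G.Adj w y ∧ ¬ G.Adj w x) := by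
      by_contra hcon
      push_neg at hcon
      refine hfree {x, y} (sduo_build hxy hnadj ?_)
      intro z hzx hzy
      by_cases hzw : z = w
      · subst hzw; exact ⟨hcon.1, hcon.2⟩
      · exact hmod z hzw hzx hzy
    rcases hone with ⟨hwx, hwy⟩ | ⟨hwy, hwx⟩
    · exact ⟨y, case_pos hconn hfree hxy hnadj hwx hwy hmod⟩
    · exact ⟨x, case_pos hconn hfree hxy.symm (fun h => hnadj h.symm) hwy hwx
        (fun z hzw hzy hzx => (hmod z hzw hzx hzy).symm)⟩
  · push_neg at hex
    haveI hne : Nonempty V := Fintype.card_pos_iff.mp (by omega)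
    have u : V := Classical.arbitrary V
    obtain ⟨v, hv⟩ := Finite.exists_max (fun t => G.dist u t)
    have huv : u ≠ v := by
      obtain ⟨u', hu'⟩ := Fintype.exists_ne_of_one_lt_card (by omega) u
      have h1 : 0 < G.dist u u' := hconn.pos_dist_of_ne (Ne.symm hu')
      have h2 := hv u'
      rintro rfl
      simp only [SimpleGraph.dist_self] at h2
      omega
    refine ⟨v, ?_, fun S S' h1 _ => (hex v S h1).elim⟩
    have hu : u ∈ ({v}ᶜ : Set V) := by simpa using huv
    have reach : ∀ x : V, ∀ hx : x ∈ ({v}ᶜ : Set V),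
        (G.induce ({v}ᶜ : Set V)).Reachable ⟨u, hu⟩ ⟨x, hx⟩ := by
      intro x hx
      have hxv : x ≠ v := by simpa using hx
      obtain ⟨p, hp⟩ := (hconn.preconnected u x).exists_walk_length_eq_dist
      have hvsup : v ∉ p.support := by
        intro hsup
        have e1 : G.dist u v ≤ (p.takeUntil v hsup).length := SimpleGraph.dist_le _
        have e2 : G.dist v x ≤ (p.dropUntil v hsup).length := SimpleGraph.dist_le _
        have e3 : (p.takeUntil v hsup).length + (p.dropUntil v hsup).length = p.length := by
          rw [← SimpleGraph.Walk.length_append, SimpleGraph.Walk.take_spec]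
        have e4 : 0 < G.dist v x := hconn.pos_dist_of_ne (Ne.symm hxv)
        have e5 := hv x
        omega
      exact reach_of_avoid p (fun z hz => by
        simp only [Set.mem_compl_iff, Set.mem_singleton_iff]
        rintro rfl; exact hvsup hz) hu hx
    rw [SimpleGraph.connected_iff]
    refine ⟨?_, ⟨⟨u, hu⟩⟩⟩
    rintro ⟨x, hx⟩ ⟨y, hy⟩
    exact (reach x hx).symm.trans (reach y hy)
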